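/- Let k ≥ 2 be an integer and let G be a finite simple graph whose vertex set is the union of two sets V_1 and V_2 such that: V_1 ∩ V_2 is a clique of G of size k, and there is no edge of G between a vertex of V_1 \ V_2 and a vertex of V_2 \ V_1. Let G_1 and G_2 be the subgraphs of G induced by V_1 and V_2, respectively (so G is a k-clique-sum of G_1 and G_2). Then meg(G_1) + meg(G_2) - 2k ≤ meg(G) ≤ meg(G_1) + meg(G_2). -/

import Mathlib

open SimpleGraph

set_option linter.unusedSectionVars false

/-- A pair of vertices `u`, `v` monitors an edge `e` if `u` and `v` are reachable from
each other and `e` belongs to every shortest path (walk of length `G.dist u v`)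
between `u` and `v`. -/
def Monitors {V : Type*} (G : SimpleGraph V) (u v : V) (e : Sym2 V) : Prop :=
  G.Reachable u v ∧ ∀ p : G.Walk u v, p.length = G.dist u v → e ∈ p.edges

/-- A monitoring edge-geodetic set of `G`: every edge of `G` is monitored by some
pair of vertices of `M`. -/
def IsMEGSet {V : Type*} (G : SimpleGraph V) (M : Set V) : Prop :=
  ∀ e ∈ G.edgeSet, ∃ u ∈ M, ∃ v ∈ M, Monitors G u v e

/-- The monitoring edge-geodetic number of `G`: the minimum size of an MEG-set. -/
noncomputable def meg {V : Type*} [Fintype V] (G : SimpleGraph V) : ℕ :=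
  sInf {n : ℕ | ∃ M : Finset V, IsMEGSet G ↑M ∧ M.card = n}

section Aux
variable {V : Type*} [DecidableEq V] {G : SimpleGraph V} {V₁ V₂ : Finset V}

private lemma memV2 (hcov : ∀ x : V, x ∈ V₁ ∨ x ∈ V₂) {x : V} (hx : x ∉ V₁) : x ∈ V₂ :=
  (hcov x).resolve_left hx

private lemma cross_mem (hcov : ∀ x : V, x ∈ V₁ ∨ x ∈ V₂)
    (hne : ∀ u v : V, u ∈ V₁ → u ∉ V₂ → v ∈ V₂ → v ∉ V₁ → ¬ G.Adj u v)
    {x y : V} (hx : x ∉ V₁) (hy : y ∈ V₁) (h : G.Adj x y) : y ∈ V₂ := by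
  by_contra hy2
  exact hne y x hy hy2 (memV2 hcov hx) hx h.symm

private lemma split_first (hcov : ∀ x : V, x ∈ V₁ ∨ x ∈ V₂)
    (hne : ∀ u v : V, u ∈ V₁ → u ∉ V₂ → v ∈ V₂ → v ∉ V₁ → ¬ G.Adj u v) :
    ∀ {u v : V} (p : G.Walk u v), u ∉ V₁ → (∃ x ∈ p.support, x ∈ V₁) →
    ∃ c, c ∈ V₁ ∧ c ∈ V₂ ∧ ∃ (p₁ : G.Walk u c) (p₂ : G.Walk c v),
      p₁.append p₂ = p ∧ ∀ x ∈ p₁.support, x ≠ c → x ∉ V₁ := by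
  intro u v p
  induction p with
  | nil =>
    intro hu hx
    obtain ⟨x, hxs, hx1⟩ := hx
    simp only [Walk.support_nil, List.mem_singleton] at hxs
    subst hxs; exact absurd hx1 hu
  | @cons u w v h q ih =>
    intro hu hx
    by_cases hw : w ∈ V₁
    · refine ⟨w, hw, cross_mem hcov hne hu hw h, Walk.cons h Walk.nil, q, by simp, ?_⟩
      intro x hxs hxc
      simp only [Walk.support_cons, Walk.support_nil, List.mem_cons, List.mem_singleton] at hxs
      rcases hxs with rfl | hxs
      · exact hu
      · rcases hxs with rfl | hxs
        · exact absurd rfl hxc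
        · simp at hxs
    · obtain ⟨x, hxs, hx1⟩ := hx
      have hxq : x ∈ q.support := by
        simp only [Walk.support_cons, List.mem_cons] at hxs
        rcases hxs with rfl | h'
        · exact absurd hx1 hu
        · exact h'
      obtain ⟨c, hc1, hc2, q₁, q₂, happ, hside⟩ := ih hw ⟨x, hxq, hx1⟩
      refine ⟨c, hc1, hc2, Walk.cons h q₁, q₂, by simp [happ], ?_⟩
      intro y hys hyc
      simp only [Walk.support_cons, List.mem_cons] at hys
      rcases hys with rfl | h'
      · exact hu
      · exact hside y h' hyc

private lemma purify (hcov : ∀ x : V, x ∈ V₁ ∨ x ∈ V₂)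
    (hne : ∀ u v : V, u ∈ V₁ → u ∉ V₂ → v ∈ V₂ → v ∉ V₁ → ¬ G.Adj u v)
    (hcl : G.IsClique ↑(V₁ ∩ V₂)) :
    ∀ n : ℕ, ∀ {u v : V} (p : G.Walk u v), p.length = n → v ∈ V₁ →
      ((u ∈ V₁ → ∃ q : G.Walk u v, (∀ x ∈ q.support, x ∈ V₁) ∧ q.length ≤ p.length ∧
          ((∃ x ∈ p.support, x ∉ V₁) → q.length < p.length)) ∧
       (u ∉ V₁ → ∃ c, c ∈ V₁ ∧ c ∈ V₂ ∧ ∃ r : G.Walk c v,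
          (∀ x ∈ r.support, x ∈ V₁) ∧ r.length + 1 ≤ p.length)) := by
  intro n
  induction n using Nat.strong_induction_on with
  | _ n ih =>
    intro u v p hn hv
    constructor
    · intro hu
      cases p with
      | nil =>
        refine ⟨Walk.nil, ?_, le_refl _, ?_⟩
        · intro x hx; simp only [Walk.support_nil, List.mem_singleton] at hx; subst hx; exact hu
        · rintro ⟨x, hxs, hx1⟩
          simp only [Walk.support_nil, List.mem_singleton] at hxs; subst hxs
          exact absurd hu hx1
      | @cons u w v h q =>
        have hq : q.length < n := by simp only [Walk.length_cons] at hn; omega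
        by_cases hw : w ∈ V₁
        · obtain ⟨q', hs, hle, hst⟩ := (ih q.length hq q rfl hv).1 hw
          refine ⟨Walk.cons h q', ?_, by simp only [Walk.length_cons]; omega, ?_⟩
          · intro x hx
            simp only [Walk.support_cons, List.mem_cons] at hx
            rcases hx with rfl | hx
            · exact hu
            · exact hs x hx
          · rintro ⟨x, hxs, hx1⟩
            simp only [Walk.support_cons, List.mem_cons] at hxs
            rcases hxs with rfl | hxs
            · exact absurd hu hx1
            · have := hst ⟨x, hxs, hx1⟩
              simp only [Walk.length_cons]; omega
        · obtain ⟨c, hc1, hc2, r, hrs, hrl⟩ := (ih q.length hq q rfl hv).2 hw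
          have hu2 : u ∈ V₂ := by
            by_contra h2
            exact hne u w hu h2 (memV2 hcov hw) hw h
          by_cases huc : u = c
          · refine ⟨r.copy huc.symm rfl, ?_, ?_, ?_⟩
            · intro x hx; rw [Walk.support_copy] at hx; exact hrs x hx
            · simp only [Walk.length_copy, Walk.length_cons]; omega
            · intro _; simp only [Walk.length_copy, Walk.length_cons]; omega
          · have hadj : G.Adj u c :=
              hcl (by simp [Finset.mem_coe, Finset.mem_inter, hu, hu2])
                  (by simp [Finset.mem_coe, Finset.mem_inter, hc1, hc2]) huc
            refine ⟨Walk.cons hadj r, ?_, ?_, ?_⟩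
            · intro x hx
              simp only [Walk.support_cons, List.mem_cons] at hx
              rcases hx with rfl | hx
              · exact hu
              · exact hrs x hx
            · simp only [Walk.length_cons]; omega
            · intro _; simp only [Walk.length_cons]; omega
    · intro hu
      cases p with
      | nil => exact absurd hv hu
      | @cons u w v h q =>
        have hq : q.length < n := by simp only [Walk.length_cons] at hn; omega
        by_cases hw : w ∈ V₁
        · have hw2 : w ∈ V₂ := cross_mem hcov hne hu hw h
          obtain ⟨q', hs, hle, _⟩ := (ih q.length hq q rfl hv).1 hw
          exact ⟨w, hw, hw2, q', hs, by simp only [Walk.length_cons]; omega⟩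
        · obtain ⟨c, hc1, hc2, r, hrs, hrl⟩ := (ih q.length hq q rfl hv).2 hw
          exact ⟨c, hc1, hc2, r, hrs, by simp only [Walk.length_cons]; omega⟩

private lemma lift_walk :
    ∀ {u v : V} (p : G.Walk u v), (∀ x ∈ p.support, x ∈ V₁) →
    ∀ (hu : u ∈ (↑V₁ : Set V)) (hv : v ∈ (↑V₁ : Set V)),
    ∃ q : (G.induce (↑V₁ : Set V)).Walk ⟨u, hu⟩ ⟨v, hv⟩,
      q.map (SimpleGraph.Embedding.induce (↑V₁ : Set V)).toHom = p := by
  intro u v p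
  induction p with
  | nil => intro _ hu hv; exact ⟨Walk.nil, by simp⟩
  | @cons u w v h q ih =>
    intro hp hu hv
    have hw : w ∈ (↑V₁ : Set V) := by
      simpa using hp w (by simp [Walk.support_cons])
    obtain ⟨q', hq'⟩ := ih (fun x hx => hp x (by simp [Walk.support_cons, hx])) hw hv
    have hadj : (G.induce (↑V₁ : Set V)).Adj ⟨u, hu⟩ ⟨w, hw⟩ := by
      simpa using h
    exact ⟨Walk.cons hadj q', by simp [hq']⟩

variable (hcov : ∀ x : V, x ∈ V₁ ∨ x ∈ V₂)
    (hne : ∀ u v : V, u ∈ V₁ → u ∉ V₂ → v ∈ V₂ → v ∉ V₁ → ¬ G.Adj u v)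
    (hcl : G.IsClique ↑(V₁ ∩ V₂))

include hcov hne hcl

private lemma shortest_support {u v : V} (hu : u ∈ V₁) (hv : v ∈ V₁)
    (p : G.Walk u v) (hp : p.length = G.dist u v) : ∀ x ∈ p.support, x ∈ V₁ := by
  by_contra hx
  push_neg at hx
  obtain ⟨x, hxs, hxn⟩ := hx
  obtain ⟨q, _, _, hst⟩ := (purify hcov hne hcl p.length p rfl hv).1 hu
  have h1 := hst ⟨x, hxs, hxn⟩
  have h2 := G.dist_le q
  omega

private lemma reach_induce {u v : V} (hu : u ∈ V₁) (hv : v ∈ V₁)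
    (hr : G.Reachable u v) :
    (G.induce (↑V₁ : Set V)).Reachable ⟨u, by simpa using hu⟩ ⟨v, by simpa using hv⟩ := by
  obtain ⟨p⟩ := hr
  obtain ⟨q, hs, _, _⟩ := (purify hcov hne hcl p.length p rfl hv).1 hu
  obtain ⟨q', _⟩ := lift_walk q hs (by simpa using hu) (by simpa using hv)
  exact q'.reachable

private lemma dist_induce {u v : V} (hu : u ∈ V₁) (hv : v ∈ V₁)
    (hr : G.Reachable u v) :
    (G.induce (↑V₁ : Set V)).dist ⟨u, by simpa using hu⟩ ⟨v, by simpa using hv⟩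
      = G.dist u v := by
  apply le_antisymm
  · obtain ⟨p, hp⟩ := hr.exists_walk_length_eq_dist
    have hs := shortest_support hcov hne hcl hu hv p hp
    obtain ⟨q, hq⟩ := lift_walk p hs (by simpa using hu) (by simpa using hv)
    have hlen : q.length = p.length := by rw [← hq]; exact (Walk.length_map ..).symm
    calc (G.induce (↑V₁ : Set V)).dist _ _ ≤ q.length := dist_le q
      _ = G.dist u v := by rw [hlen, hp]
  · obtain ⟨q, hq⟩ := (reach_induce hcov hne hcl hu hv hr).exists_walk_length_eq_dist
    calc G.dist u v ≤ (q.map (SimpleGraph.Embedding.induce (↑V₁ : Set V)).toHom).length :=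
        dist_le _
      _ = _ := by rw [Walk.length_map, hq]

private lemma monitors_up (u v a b : ↥(↑V₁ : Set V))
    (hm : Monitors (G.induce (↑V₁ : Set V)) u v s(a, b)) :
    Monitors G u.1 v.1 s(a.1, b.1) := by
  obtain ⟨hr, hmon⟩ := hm
  have hrG : G.Reachable u.1 v.1 :=
    hr.map (SimpleGraph.Embedding.induce (↑V₁ : Set V)).toHom
  have hu : u.1 ∈ V₁ := by simpa using u.2
  have hv : v.1 ∈ V₁ := by simpa using v.2
  refine ⟨hrG, ?_⟩
  intro p hp
  have hs := shortest_support hcov hne hcl hu hv p hp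
  obtain ⟨q, hq⟩ := lift_walk p hs u.2 v.2
  have hql : q.length = (G.induce (↑V₁ : Set V)).dist u v := by
    have h1 : q.length = p.length := by rw [← hq]; exact (Walk.length_map ..).symm
    rw [h1, hp, dist_induce hcov hne hcl hu hv hrG]
  have hmem := hmon q hql
  have key : s(a.1, b.1) ∈ (q.map (SimpleGraph.Embedding.induce (↑V₁ : Set V)).toHom).edges := by
    rw [Walk.edges_map]; exact List.mem_map.mpr ⟨s(a, b), hmem, rfl⟩
  rw [← hq]; exact key

private lemma monitors_down (u v a b : ↥(↑V₁ : Set V))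
    (hm : Monitors G u.1 v.1 s(a.1, b.1)) :
    Monitors (G.induce (↑V₁ : Set V)) u v s(a, b) := by
  obtain ⟨hr, hmon⟩ := hm
  have hu : u.1 ∈ V₁ := by simpa using u.2
  have hv : v.1 ∈ V₁ := by simpa using v.2
  refine ⟨reach_induce hcov hne hcl hu hv hr, ?_⟩
  intro q hq
  set p := q.map (SimpleGraph.Embedding.induce (↑V₁ : Set V)).toHom with hpdef
  have hpl : p.length = G.dist u.1 v.1 := by
    rw [hpdef, Walk.length_map, hq, dist_induce hcov hne hcl hu hv hr]
  have hmem := hmon p hpl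
  have hmem : s(a.1, b.1) ∈ (q.map (SimpleGraph.Embedding.induce (↑V₁ : Set V)).toHom).edges := hmem
  rw [Walk.edges_map] at hmem
  obtain ⟨f, hf, hfe⟩ := List.mem_map.mp hmem
  have hfeq : f = s(a, b) := by
    induction f using Sym2.ind with
    | _ x y =>
      simp only [Sym2.map_pair_eq, Sym2.eq_iff] at hfe ⊢
      rcases hfe with ⟨h1, h2⟩ | ⟨h1, h2⟩
      · exact Or.inl ⟨Subtype.ext h1, Subtype.ext h2⟩
      · exact Or.inr ⟨Subtype.ext h1, Subtype.ext h2⟩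
  exact hfeq ▸ hf

omit hcl

private lemma monitors_symm' {u v : V} {e : Sym2 V} (h : Monitors G u v e) :
    Monitors G v u e := by
  refine ⟨h.1.symm, fun p hp => ?_⟩
  have := h.2 p.reverse (by rw [Walk.length_reverse, hp, SimpleGraph.dist_comm])
  rwa [Walk.edges_reverse, List.mem_reverse] at this

private lemma replace_end
    {u v a b : V} (ha1 : a ∈ V₁) (hb1 : b ∈ V₁) (hadj : G.Adj a b) (hu : u ∉ V₁)
    (hm : Monitors G u v s(a, b)) :
    ∃ c, c ∈ V₁ ∧ c ∈ V₂ ∧ Monitors G c v s(a, b) := by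
  obtain ⟨hr, hmon⟩ := hm
  obtain ⟨P, hP⟩ := hr.exists_walk_length_eq_dist
  have heP : s(a, b) ∈ P.edges := hmon P hP
  have haP : a ∈ P.support := P.fst_mem_support_of_mem_edges heP
  obtain ⟨c, hc1, hc2, p₁, p₂, happ, hside⟩ := split_first hcov hne P hu ⟨a, haP, ha1⟩
  have hnotin : s(a, b) ∉ p₁.edges := by
    intro hmem
    by_cases hac : a = c
    · have hb : b ∈ p₁.support := p₁.snd_mem_support_of_mem_edges hmem
      have hbc : b ≠ c := fun hb' => hadj.ne (hac.trans hb'.symm)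
      exact (hside b hb hbc) hb1
    · exact (hside a (p₁.fst_mem_support_of_mem_edges hmem) hac) ha1
  refine ⟨c, hc1, hc2, p₂.reachable, ?_⟩
  intro Q hQ
  have h1 : G.dist u v ≤ p₁.length + Q.length := by
    have := G.dist_le (p₁.append Q)
    simpa [Walk.length_append] using this
  have h2 : Q.length ≤ p₂.length := by rw [hQ]; exact dist_le p₂
  have h3 : p₁.length + p₂.length = G.dist u v := by
    rw [← hP, ← happ, Walk.length_append]
  have hlen : (p₁.append Q).length = G.dist u v := by
    rw [Walk.length_append]; omega
  have := hmon (p₁.append Q) hlen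
  rw [Walk.edges_append, List.mem_append] at this
  exact this.resolve_left hnotin

include hcl

private lemma lower_megset {M : Finset V} (hM : IsMEGSet G ↑M) :
    IsMEGSet (G.induce (↑V₁ : Set V))
      ↑(Finset.univ.filter (fun x : ↥(↑V₁ : Set V) => x.1 ∈ M ∨ x.1 ∈ V₁ ∩ V₂)) := by
  intro e he
  revert he
  induction e using Sym2.ind with
  | _ α β =>
    intro he
    have hadj : G.Adj α.1 β.1 := by simpa using he
    have ha1 : α.1 ∈ V₁ := by simpa using α.2
    have hb1 : β.1 ∈ V₁ := by simpa using β.2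
    obtain ⟨u, huM, v, hvM, hmon⟩ := hM s(α.1, β.1) (G.mem_edgeSet.mpr hadj)
    have fix : ∀ w z : V, w ∈ M → Monitors G w z s(α.1, β.1) →
        ∃ w', w' ∈ V₁ ∧ (w' ∈ M ∨ w' ∈ V₁ ∩ V₂) ∧ Monitors G w' z s(α.1, β.1) := by
      intro w z hw hmw
      by_cases hw1 : w ∈ V₁
      · exact ⟨w, hw1, Or.inl hw, hmw⟩
      · obtain ⟨c, hc1, hc2, hcm⟩ := replace_end hcov hne ha1 hb1 hadj hw1 hmw
        exact ⟨c, hc1, Or.inr (Finset.mem_inter.mpr ⟨hc1, hc2⟩), hcm⟩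
    obtain ⟨u', hu1, huMC, hmon1⟩ := fix u v huM hmon
    obtain ⟨v', hv1, hvMC, hmon2⟩ := fix v u' hvM (monitors_symm' hcov hne hmon1)
    have hfin : Monitors G u' v' s(α.1, β.1) := monitors_symm' hcov hne hmon2
    have hd := monitors_down hcov hne hcl ⟨u', by simpa using hu1⟩ ⟨v', by simpa using hv1⟩
      α β hfin
    refine ⟨⟨u', by simpa using hu1⟩, ?_, ⟨v', by simpa using hv1⟩, ?_, hd⟩
    · exact Finset.mem_coe.mpr (Finset.mem_filter.mpr ⟨Finset.mem_univ _, huMC⟩)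
    · exact Finset.mem_coe.mpr (Finset.mem_filter.mpr ⟨Finset.mem_univ _, hvMC⟩)

omit hcov hne hcl

private lemma card_filter_le (M : Finset V) :
    (Finset.univ.filter (fun x : ↥(↑V₁ : Set V) => x.1 ∈ M ∨ x.1 ∈ V₁ ∩ V₂)).card
      ≤ (M ∩ V₁).card + ((V₁ ∩ V₂) \ M).card := by
  set N := Finset.univ.filter (fun x : ↥(↑V₁ : Set V) => x.1 ∈ M ∨ x.1 ∈ V₁ ∩ V₂) with hN
  have himg : N.image Subtype.val ⊆ (M ∩ V₁) ∪ ((V₁ ∩ V₂) \ M) := by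
    intro y hy
    simp only [Finset.mem_image] at hy
    obtain ⟨x, hx, rfl⟩ := hy
    have hx1 : x.1 ∈ V₁ := by simpa using x.2
    rcases (Finset.mem_filter.mp hx).2 with hxM | hxC
    · exact Finset.mem_union_left _ (Finset.mem_inter.mpr ⟨hxM, hx1⟩)
    · by_cases hxM : x.1 ∈ M
      · exact Finset.mem_union_left _ (Finset.mem_inter.mpr ⟨hxM, hx1⟩)
      · exact Finset.mem_union_right _ (Finset.mem_sdiff.mpr ⟨hxC, hxM⟩)
  calc N.card = (N.image Subtype.val).card :=
        (Finset.card_image_of_injective _ Subtype.val_injective).symm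
    _ ≤ ((M ∩ V₁) ∪ ((V₁ ∩ V₂) \ M)).card := Finset.card_le_card himg
    _ ≤ _ := Finset.card_union_le _ _

end Aux

section Meg
variable {V : Type*} [Fintype V] [DecidableEq V] {G : SimpleGraph V}

private lemma isMEGSet_univ : IsMEGSet G ↑(Finset.univ : Finset V) := by
  intro e he
  revert he
  induction e using Sym2.ind with
  | _ a b =>
    intro he
    rw [mem_edgeSet] at he
    refine ⟨a, by simp, b, by simp, he.reachable, ?_⟩
    intro p hp
    rw [dist_eq_one_iff_adj.mpr he] at hp
    cases p with
    | nil => simp at hp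
    | @cons a w b h' q =>
      have hwb : w = b := Walk.eq_of_length_eq_zero (by simpa using hp)
      subst hwb
      simp

private lemma exists_meg (G : SimpleGraph V) :
    ∃ M : Finset V, IsMEGSet G ↑M ∧ M.card = meg G := by
  have hne : {n : ℕ | ∃ M : Finset V, IsMEGSet G ↑M ∧ M.card = n}.Nonempty :=
    ⟨_, Finset.univ, isMEGSet_univ, rfl⟩
  exact Nat.sInf_mem hne

private lemma meg_le_card {M : Finset V} (h : IsMEGSet G ↑M) : meg G ≤ M.card :=
  Nat.sInf_le ⟨M, h, rfl⟩

end Meg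

/-- if `G` is a `k`-clique-sum of `G₁ = G[V₁]` and `G₂ = G[V₂]` (with `k ≥ 2`),
then `meg G₁ + meg G₂ - 2k ≤ meg G ≤ meg G₁ + meg G₂`. -/
theorem meg_clique_sum {V : Type*} [Fintype V] [DecidableEq V] (G : SimpleGraph V)
    (k : ℕ) (hk : 2 ≤ k) (V₁ V₂ : Finset V)
    (hcover : V₁ ∪ V₂ = Finset.univ)
    (hcard : (V₁ ∩ V₂).card = k)
    (hclique : G.IsClique ↑(V₁ ∩ V₂))
    (hnoedge : ∀ u v : V, u ∈ V₁ → u ∉ V₂ → v ∈ V₂ → v ∉ V₁ → ¬ G.Adj u v) :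
    (meg (G.induce ↑V₁) : ℤ) + meg (G.induce ↑V₂) - 2 * k ≤ meg G ∧
      meg G ≤ meg (G.induce ↑V₁) + meg (G.induce ↑V₂) := by
  have hcov : ∀ x : V, x ∈ V₁ ∨ x ∈ V₂ := by
    intro x
    have hx : x ∈ V₁ ∪ V₂ := hcover ▸ Finset.mem_univ x
    simpa [Finset.mem_union] using hx
  have hcov2 : ∀ x : V, x ∈ V₂ ∨ x ∈ V₁ := fun x => (hcov x).symm
  have hne2 : ∀ u v : V, u ∈ V₂ → u ∉ V₁ → v ∈ V₁ → v ∉ V₂ → ¬ G.Adj u v :=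
    fun u v h1 h2 h3 h4 hadj => hnoedge v u h3 h4 h1 h2 hadj.symm
  have hcl2 : G.IsClique ↑(V₂ ∩ V₁) := by rwa [Finset.inter_comm]
  have classify : ∀ a b : V, G.Adj a b → (a ∈ V₁ ∧ b ∈ V₁) ∨ (a ∈ V₂ ∧ b ∈ V₂) := by
    intro a b hab
    by_cases ha : a ∈ V₁
    · by_cases hb : b ∈ V₁
      · exact Or.inl ⟨ha, hb⟩
      · have hb2 : b ∈ V₂ := (hcov b).resolve_left hb
        have ha2 : a ∈ V₂ := by
          by_contra ha2
          exact hnoedge a b ha ha2 hb2 hb hab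
        exact Or.inr ⟨ha2, hb2⟩
    · have ha2 : a ∈ V₂ := (hcov a).resolve_left ha
      by_cases hb : b ∈ V₁
      · exact Or.inr ⟨ha2, cross_mem hcov hnoedge ha hb hab⟩
      · exact Or.inr ⟨ha2, (hcov b).resolve_left hb⟩
  constructor
  · -- lower bound
    obtain ⟨M, hM, hcM⟩ := exists_meg G
    have hmeg1 : meg (G.induce (↑V₁ : Set V)) ≤ (M ∩ V₁).card + ((V₁ ∩ V₂) \ M).card :=
      le_trans (meg_le_card (lower_megset hcov hnoedge hclique hM)) (card_filter_le M)
    have hmeg2 : meg (G.induce (↑V₂ : Set V)) ≤ (M ∩ V₂).card + ((V₂ ∩ V₁) \ M).card :=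
      le_trans (meg_le_card (lower_megset hcov2 hne2 hcl2 hM)) (card_filter_le M)
    have hsd : (V₂ ∩ V₁) \ M = (V₁ ∩ V₂) \ M := by rw [Finset.inter_comm]
    rw [hsd] at hmeg2
    have hsum : (M ∩ V₁).card + (M ∩ V₂).card = M.card + (M ∩ (V₁ ∩ V₂)).card := by
      have h1 := Finset.card_union_add_card_inter (M ∩ V₁) (M ∩ V₂)
      have h2 : (M ∩ V₁) ∪ (M ∩ V₂) = M := by
        rw [← Finset.inter_union_distrib_left, hcover, Finset.inter_univ]
      have h3 : (M ∩ V₁) ∩ (M ∩ V₂) = M ∩ (V₁ ∩ V₂) := by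
        ext x
        simp only [Finset.mem_inter]
        tauto
      rw [h2, h3] at h1
      omega
    have hpart : ((V₁ ∩ V₂) ∩ M).card + ((V₁ ∩ V₂) \ M).card = k := by
      rw [Finset.card_inter_add_card_sdiff, hcard]
    have hMC : (M ∩ (V₁ ∩ V₂)).card = ((V₁ ∩ V₂) ∩ M).card := by
      rw [Finset.inter_comm]
    have hsdk : ((V₁ ∩ V₂) \ M).card ≤ k := by
      calc ((V₁ ∩ V₂) \ M).card ≤ (V₁ ∩ V₂).card := Finset.card_le_card (Finset.sdiff_subset)
        _ = k := hcard
    have : meg (G.induce (↑V₁ : Set V)) + meg (G.induce (↑V₂ : Set V)) ≤ meg G + 2 * k := by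
      omega
    omega
  · -- upper bound
    obtain ⟨M₁, hM₁, hc₁⟩ := exists_meg (G.induce (↑V₁ : Set V))
    obtain ⟨M₂, hM₂, hc₂⟩ := exists_meg (G.induce (↑V₂ : Set V))
    have hMEG : IsMEGSet G ↑(M₁.image Subtype.val ∪ M₂.image Subtype.val) := by
      intro e he
      revert he
      induction e using Sym2.ind with
      | _ a b =>
        intro he
        rw [mem_edgeSet] at he
        rcases classify a b he with ⟨ha, hb⟩ | ⟨ha, hb⟩
        · have hedge : s((⟨a, by simpa using ha⟩ : ↥(↑V₁ : Set V)), ⟨b, by simpa using hb⟩)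
              ∈ (G.induce (↑V₁ : Set V)).edgeSet := by
            rw [mem_edgeSet]; simpa using he
          obtain ⟨u₀, hu₀, v₀, hv₀, hmon⟩ := hM₁ _ hedge
          have hmon' := monitors_up hcov hnoedge hclique u₀ v₀ _ _ hmon
          refine ⟨u₀.1, ?_, v₀.1, ?_, hmon'⟩
          · exact Finset.mem_coe.mpr (Finset.mem_union_left _
              (Finset.mem_image_of_mem _ (Finset.mem_coe.mp hu₀)))
          · exact Finset.mem_coe.mpr (Finset.mem_union_left _
              (Finset.mem_image_of_mem _ (Finset.mem_coe.mp hv₀)))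
        · have hedge : s((⟨a, by simpa using ha⟩ : ↥(↑V₂ : Set V)), ⟨b, by simpa using hb⟩)
              ∈ (G.induce (↑V₂ : Set V)).edgeSet := by
            rw [mem_edgeSet]; simpa using he
          obtain ⟨u₀, hu₀, v₀, hv₀, hmon⟩ := hM₂ _ hedge
          have hmon' := monitors_up hcov2 hne2 hcl2 u₀ v₀ _ _ hmon
          refine ⟨u₀.1, ?_, v₀.1, ?_, hmon'⟩
          · exact Finset.mem_coe.mpr (Finset.mem_union_right _
              (Finset.mem_image_of_mem _ (Finset.mem_coe.mp hu₀)))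
          · exact Finset.mem_coe.mpr (Finset.mem_union_right _
              (Finset.mem_image_of_mem _ (Finset.mem_coe.mp hv₀)))
    calc meg G ≤ (M₁.image Subtype.val ∪ M₂.image Subtype.val).card := meg_le_card hMEG
      _ ≤ (M₁.image Subtype.val).card + (M₂.image Subtype.val).card :=
          Finset.card_union_le _ _
      _ ≤ M₁.card + M₂.card := add_le_add Finset.card_image_le Finset.card_image_le
      _ = _ := by rw [hc₁, hc₂]
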